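/- Let g = diag(a₁,...,a_n) ∈ SL_n(ℝ) with a₁ ≥ ... ≥ a_n > 0, and let H = [span(e₂,...,e_n)]. For r, ε ∈ (0,1], if a₂/a₁ ≤ ε, then the projective map [g] is (ε/r²)-Lipschitz on the set of points of ℙ^{n-1}(ℝ) at distance at least r from H. -/

import Mathlib

open scoped BigOperators

/-- The Euclidean norm on `ℝⁿ`. -/
noncomputable def eucNorm (n : ℕ) (v : Fin n → ℝ) : ℝ := Real.sqrt (∑ i, v i ^ 2)

/-- The Euclidean norm of the wedge product `v ∧ w` in `Λ²ℝⁿ`. -/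
noncomputable def wedgeNorm (n : ℕ) (v w : Fin n → ℝ) : ℝ :=
  Real.sqrt ((∑ i, ∑ j, (v i * w j - v j * w i) ^ 2) / 2)

/-- The standard metric on `ℙ^{n-1}(ℝ)`: `d([v],[w]) = ‖v ∧ w‖ / (‖v‖‖w‖)`. -/
noncomputable def projDist (n : ℕ) (v w : Fin n → ℝ) : ℝ :=
  wedgeNorm n v w / (eucNorm n v * eucNorm n w)

/-- The distance from a point `[v]` of `ℙ^{n-1}(ℝ)` to the projectivization of a set `H`
of nonzero vectors. -/
noncomputable def projDistSet (n : ℕ) (v : Fin n → ℝ) (H : Set (Fin n → ℝ)) : ℝ :=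
  sInf {d | ∃ w, w ≠ 0 ∧ w ∈ H ∧ d = projDist n v w}

open Finset

lemma eucNorm_nonneg' {n : ℕ} (v : Fin n → ℝ) : 0 ≤ eucNorm n v := Real.sqrt_nonneg _

lemma sum_sq_nonneg' {n : ℕ} (v : Fin n → ℝ) : 0 ≤ ∑ i, v i ^ 2 :=
  Finset.sum_nonneg fun _ _ => sq_nonneg _

lemma sum_sq_pos' {n : ℕ} {v : Fin n → ℝ} (hv : v ≠ 0) : 0 < ∑ i, v i ^ 2 := by
  obtain ⟨i, hi⟩ := Function.ne_iff.1 hv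
  have h2 : 0 < v i ^ 2 := by rw [← sq_abs]; exact pow_pos (abs_pos.2 hi) 2
  exact lt_of_lt_of_le h2 (Finset.single_le_sum (fun j _ => sq_nonneg (v j)) (mem_univ i))

lemma eucNorm_pos' {n : ℕ} {v : Fin n → ℝ} (hv : v ≠ 0) : 0 < eucNorm n v :=
  Real.sqrt_pos.2 (sum_sq_pos' hv)

lemma wedgeNorm_nonneg' {n : ℕ} (v w : Fin n → ℝ) : 0 ≤ wedgeNorm n v w := Real.sqrt_nonneg _

lemma projDist_nonneg' {n : ℕ} (v w : Fin n → ℝ) : 0 ≤ projDist n v w :=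
  div_nonneg (wedgeNorm_nonneg' v w) (mul_nonneg (eucNorm_nonneg' v) (eucNorm_nonneg' w))

/-- If `[v]` is at distance at least `r` from `H = {x | x₀ = 0}`, then `r‖v‖ ≤ |v₀|`. -/
lemma key_lower {n : ℕ} (hn : 1 < n) (v : Fin n → ℝ) (hv : v ≠ 0) {r : ℝ} (hr1 : r ≤ 1)
    (h : r ≤ projDistSet n v {x | x ⟨0, by omega⟩ = 0}) :
    r * eucNorm n v ≤ |v ⟨0, by omega⟩| := by
  set z : Fin n := ⟨0, by omega⟩ with hz
  set w : Fin n → ℝ := fun i => if i = z then 0 else v i with hwdef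
  by_cases hw0 : w = 0
  · have hvz : ∀ i, i ≠ z → v i = 0 := by
      intro i hi
      have := congrFun hw0 i
      simpa [hwdef, hi] using this
    have hsum : ∑ i, v i ^ 2 = v z ^ 2 := by
      rw [← Finset.sum_subset (Finset.subset_univ {z})]
      · simp
      · intro i _ hi
        simp only [Finset.mem_singleton] at hi
        rw [hvz i hi]; ring
    have he : eucNorm n v = |v z| := by
      rw [eucNorm, hsum, Real.sqrt_sq_eq_abs]
    rw [he]
    nlinarith [abs_nonneg (v z)]
  · have hwz : w z = 0 := by simp [hwdef]
    have hwi : ∀ i, i ≠ z → w i = v i := by intro i hi; simp [hwdef, hi]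
    set T : ℝ := ∑ i, w i ^ 2 with hT
    have hT0 : 0 < T := sum_sq_pos' hw0
    have hsum : ∑ i, ∑ j, (v i * w j - v j * w i) ^ 2 = 2 * (v z ^ 2 * T) := by
      have hterm : ∀ i j : Fin n, (v i * w j - v j * w i) ^ 2
          = (if i = z then (v z * w j) ^ 2 else 0) + (if j = z then (v z * w i) ^ 2 else 0) := by
        intro i j
        by_cases hi : i = z
        · subst hi
          by_cases hj : j = z
          · subst hj; simp [hwz]
          · rw [if_pos rfl, if_neg hj, hwz]; ring
        · by_cases hj : j = z
          · subst hj
            rw [if_neg hi, if_pos rfl, hwz, hwi i hi]; ring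
          · rw [hwi i hi, hwi j hj, if_neg hi, if_neg hj]; ring
      calc ∑ i, ∑ j, (v i * w j - v j * w i) ^ 2
          = ∑ i, ∑ j, ((if i = z then (v z * w j) ^ 2 else 0)
              + (if j = z then (v z * w i) ^ 2 else 0)) :=
            Finset.sum_congr rfl fun i _ => Finset.sum_congr rfl fun j _ => hterm i j
        _ = (∑ i, ∑ j, if i = z then (v z * w j) ^ 2 else 0)
              + ∑ i, ∑ j, (if j = z then (v z * w i) ^ 2 else 0) := by
            rw [← Finset.sum_add_distrib]
            exact Finset.sum_congr rfl fun i _ => Finset.sum_add_distrib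
        _ = (∑ j, (v z * w j) ^ 2) + ∑ i, (v z * w i) ^ 2 := by
            congr 1
            · rw [Finset.sum_comm]
              refine Finset.sum_congr rfl fun j _ => ?_
              rw [Finset.sum_ite_eq' Finset.univ z (fun _ => (v z * w j) ^ 2)]
              simp
            · refine Finset.sum_congr rfl fun i _ => ?_
              rw [Finset.sum_ite_eq' Finset.univ z (fun _ => (v z * w i) ^ 2)]
              simp
        _ = 2 * (v z ^ 2 * T) := by
            simp only [mul_pow, ← Finset.mul_sum, hT]; ring
    have hwedge : wedgeNorm n v w = |v z| * Real.sqrt T := by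
      rw [wedgeNorm, hsum]
      rw [show 2 * (v z ^ 2 * T) / 2 = v z ^ 2 * T by ring]
      rw [Real.sqrt_mul (sq_nonneg _), Real.sqrt_sq_eq_abs]
    have heucw : eucNorm n w = Real.sqrt T := rfl
    have hproj : projDist n v w = |v z| / eucNorm n v := by
      rw [projDist, hwedge, heucw]
      rw [mul_comm (eucNorm n v) (Real.sqrt T)]
      rw [show |v z| * Real.sqrt T / (Real.sqrt T * eucNorm n v)
          = Real.sqrt T * |v z| / (Real.sqrt T * eucNorm n v) by ring]
      rw [mul_div_mul_left _ _ (ne_of_gt (Real.sqrt_pos.2 hT0))]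
    have hmem : projDist n v w ∈ {d | ∃ u, u ≠ 0 ∧ u ∈ {x : Fin n → ℝ | x z = 0} ∧ d = projDist n v u} :=
      ⟨w, hw0, hwz, rfl⟩
    have hbdd : BddBelow {d | ∃ u, u ≠ 0 ∧ u ∈ {x : Fin n → ℝ | x z = 0} ∧ d = projDist n v u} := by
      refine ⟨0, fun d hd => ?_⟩
      obtain ⟨u, -, -, rfl⟩ := hd
      exact projDist_nonneg' v u
    have hle : projDistSet n v {x | x z = 0} ≤ projDist n v w := csInf_le hbdd hmem
    have : r ≤ |v z| / eucNorm n v := by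
      calc r ≤ projDistSet n v {x | x z = 0} := h
        _ ≤ projDist n v w := hle
        _ = |v z| / eucNorm n v := hproj
    exact (le_div_iff₀ (eucNorm_pos' hv)).1 this

/-- Let `g = diag(a₁,…,aₙ) ∈ SL_n(ℝ)` with decreasing positive diagonal, and let
`H = [span(e₂,…,eₙ)] = {w : w₁ = 0}`. For `r, ε ∈ (0,1]`, if `a₂/a₁ ≤ ε`, then `[g]` is
`(ε/r²)`-Lipschitz on the set of points of `ℙ^{n-1}(ℝ)` at distance at least `r` from `H`. -/
theorem stmt12 (n : ℕ) (hn : 2 ≤ n) (a : Fin n → ℝ) (hpos : ∀ i, 0 < a i)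
    (hmono : ∀ i j : Fin n, i ≤ j → a j ≤ a i) (hdet : ∏ i, a i = 1)
    (r ε : ℝ) (hr0 : 0 < r) (hr1 : r ≤ 1) (hε0 : 0 < ε) (hε1 : ε ≤ 1)
    (hgap : a ⟨1, by omega⟩ / a ⟨0, by omega⟩ ≤ ε) :
    ∀ v w : Fin n → ℝ, v ≠ 0 → w ≠ 0 →
      r ≤ projDistSet n v {x | x ⟨0, by omega⟩ = 0} →
      r ≤ projDistSet n w {x | x ⟨0, by omega⟩ = 0} →
      projDist n (fun i => a i * v i) (fun i => a i * w i) ≤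
        (ε / r ^ 2) * projDist n v w := by
  intro v w hv hw hrv hrw
  set A : ℝ := a ⟨0, by omega⟩ with hA
  set B : ℝ := a ⟨1, by omega⟩ with hB
  have hApos : 0 < A := hpos _
  have hBpos : 0 < B := hpos _
  have hv0 : r * eucNorm n v ≤ |v ⟨0, by omega⟩| := key_lower hn v hv hr1 hrv
  have hw0 : r * eucNorm n w ≤ |w ⟨0, by omega⟩| := key_lower hn w hw hr1 hrw
  have hNv : 0 < eucNorm n v := eucNorm_pos' hv
  have hNw : 0 < eucNorm n w := eucNorm_pos' hw
  -- product bound on diagonal entries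
  have h01 : ∀ i j : Fin n, i < j → a i * a j ≤ A * B := by
    intro i j h
    have h1 : a i ≤ A := hmono ⟨0, by omega⟩ i (Fin.le_def.2 (by simp))
    have h2 : a j ≤ B := hmono ⟨1, by omega⟩ j (Fin.le_def.2 (by
      have := Fin.lt_def.1 h; simp; omega))
    exact mul_le_mul h1 h2 (hpos j).le hApos.le
  have hij : ∀ i j : Fin n, i ≠ j → a i * a j ≤ A * B := by
    intro i j h
    rcases lt_or_gt_of_ne h with h' | h'
    · exact h01 i j h'
    · rw [mul_comm]; exact h01 j i h'
  -- wedge norm bound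
  have hwedge : wedgeNorm n (fun i => a i * v i) (fun i => a i * w i)
      ≤ A * B * wedgeNorm n v w := by
    have hterm : ∀ i j : Fin n,
        (a i * v i * (a j * w j) - a j * v j * (a i * w i)) ^ 2
          ≤ (A * B) ^ 2 * (v i * w j - v j * w i) ^ 2 := by
      intro i j
      by_cases h : i = j
      · subst h; simp
      · have h1 : (a i * v i * (a j * w j) - a j * v j * (a i * w i)) ^ 2
            = (a i * a j) ^ 2 * (v i * w j - v j * w i) ^ 2 := by ring
        rw [h1]
        exact mul_le_mul_of_nonneg_right
          (pow_le_pow_left₀ (mul_pos (hpos i) (hpos j)).le (hij i j h) 2) (sq_nonneg _)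
    have hsum : ∑ i, ∑ j, (a i * v i * (a j * w j) - a j * v j * (a i * w i)) ^ 2
        ≤ (A * B) ^ 2 * ∑ i, ∑ j, (v i * w j - v j * w i) ^ 2 := by
      rw [Finset.mul_sum]
      refine Finset.sum_le_sum fun i _ => ?_
      rw [Finset.mul_sum]
      exact Finset.sum_le_sum fun j _ => hterm i j
    rw [wedgeNorm, wedgeNorm]
    rw [show A * B * Real.sqrt ((∑ i, ∑ j, (v i * w j - v j * w i) ^ 2) / 2)
        = Real.sqrt ((A * B) ^ 2 * ((∑ i, ∑ j, (v i * w j - v j * w i) ^ 2) / 2)) by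
      rw [Real.sqrt_mul (sq_nonneg _), Real.sqrt_sq (by positivity)]]
    apply Real.sqrt_le_sqrt
    calc (∑ i, ∑ j, (a i * v i * (a j * w j) - a j * v j * (a i * w i)) ^ 2) / 2
        ≤ ((A * B) ^ 2 * ∑ i, ∑ j, (v i * w j - v j * w i) ^ 2) / 2 := by linarith
      _ = (A * B) ^ 2 * ((∑ i, ∑ j, (v i * w j - v j * w i) ^ 2) / 2) := by ring
  -- norm lower bounds
  have hnormv : A * r * eucNorm n v ≤ eucNorm n (fun i => a i * v i) := by
    have h1 : (A * |v ⟨0, by omega⟩|) ^ 2 ≤ ∑ i, (a i * v i) ^ 2 := by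
      calc (A * |v ⟨0, by omega⟩|) ^ 2 = (a ⟨0, by omega⟩ * v ⟨0, by omega⟩) ^ 2 := by
            rw [mul_pow, mul_pow, sq_abs, hA]
        _ ≤ ∑ i, (a i * v i) ^ 2 :=
            Finset.single_le_sum (f := fun i => (a i * v i) ^ 2)
              (fun i _ => sq_nonneg _) (Finset.mem_univ (⟨0, by omega⟩ : Fin n))
    calc A * r * eucNorm n v = A * (r * eucNorm n v) := by ring
      _ ≤ A * |v ⟨0, by omega⟩| := by
          exact mul_le_mul_of_nonneg_left hv0 hApos.le
      _ = Real.sqrt ((A * |v ⟨0, by omega⟩|) ^ 2) := (Real.sqrt_sq (by positivity)).symm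
      _ ≤ Real.sqrt (∑ i, (a i * v i) ^ 2) := Real.sqrt_le_sqrt h1
      _ = eucNorm n (fun i => a i * v i) := rfl
  have hnormw : A * r * eucNorm n w ≤ eucNorm n (fun i => a i * w i) := by
    have h1 : (A * |w ⟨0, by omega⟩|) ^ 2 ≤ ∑ i, (a i * w i) ^ 2 := by
      calc (A * |w ⟨0, by omega⟩|) ^ 2 = (a ⟨0, by omega⟩ * w ⟨0, by omega⟩) ^ 2 := by
            rw [mul_pow, mul_pow, sq_abs, hA]
        _ ≤ ∑ i, (a i * w i) ^ 2 :=
            Finset.single_le_sum (f := fun i => (a i * w i) ^ 2)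
              (fun i _ => sq_nonneg _) (Finset.mem_univ (⟨0, by omega⟩ : Fin n))
    calc A * r * eucNorm n w = A * (r * eucNorm n w) := by ring
      _ ≤ A * |w ⟨0, by omega⟩| := mul_le_mul_of_nonneg_left hw0 hApos.le
      _ = Real.sqrt ((A * |w ⟨0, by omega⟩|) ^ 2) := (Real.sqrt_sq (by positivity)).symm
      _ ≤ Real.sqrt (∑ i, (a i * w i) ^ 2) := Real.sqrt_le_sqrt h1
      _ = eucNorm n (fun i => a i * w i) := rfl
  -- assemble
  have hdenpos : 0 < A * r * eucNorm n v * (A * r * eucNorm n w) := by positivity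
  have hmain : projDist n (fun i => a i * v i) (fun i => a i * w i)
      ≤ A * B * wedgeNorm n v w / (A * r * eucNorm n v * (A * r * eucNorm n w)) := by
    rw [projDist]
    apply div_le_div₀ (mul_nonneg (mul_nonneg hApos.le hBpos.le) (wedgeNorm_nonneg' v w)) hwedge hdenpos
    exact mul_le_mul hnormv hnormw (by positivity) (eucNorm_nonneg' _)
  calc projDist n (fun i => a i * v i) (fun i => a i * w i)
      ≤ A * B * wedgeNorm n v w / (A * r * eucNorm n v * (A * r * eucNorm n w)) := hmain
    _ = (B / A) / r ^ 2 * (wedgeNorm n v w / (eucNorm n v * eucNorm n w)) := by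
        field_simp
    _ ≤ (ε / r ^ 2) * (wedgeNorm n v w / (eucNorm n v * eucNorm n w)) := by
        gcongr
        exact div_nonneg (wedgeNorm_nonneg' v w) (by positivity)
    _ = (ε / r ^ 2) * projDist n v w := rfl
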